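/- Let V be a real vector space, Y ⊆ X ⊆ V, and 𝔸 an additive subgroup of (ℝ,+) with 1 ∈ 𝔸. Define the 𝔸-convex hull conv_𝔸(Y) := {ℓ⃗(f) : f ∈ Fin(Y, 𝔸 ∩ [0,1]) with ℓ(f) = 1}. Then Y is a positive weak 𝔸-face of X if and only if Y is a weak 𝔸-face of both X and X ∪ {0}, and 0 ∉ conv_𝔸(Y). -/

import Mathlib

open Finsupp

/-- `R₊ := R ∩ [0,∞)`. -/
def Rplus (R : Set ℝ) : Set ℝ := R ∩ Set.Ici 0

/-- `ℓ(f) := Σ_v f(v)`. -/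
noncomputable def ell {V : Type*} [AddCommGroup V] [Module ℝ V] (f : V →₀ ℝ) : ℝ :=
  f.sum fun _ r => r

/-- `ℓ⃗(f) := Σ_v f(v) • v`. -/
noncomputable def vell {V : Type*} [AddCommGroup V] [Module ℝ V] (f : V →₀ ℝ) : V :=
  f.sum fun v r => r • v

/-- `f ∈ Fin(X,R)`: finitely supported, support in `X`, values in `R ∪ {0}`. -/
def IsFinSupp {V : Type*} [AddCommGroup V] [Module ℝ V] (X : Set V) (R : Set ℝ)
    (f : V →₀ ℝ) : Prop :=
  ↑f.support ⊆ X ∧ ∀ v, f v ∈ R ∪ {0}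

/-- `Y` is a weak `R`-face of `X`. -/
def IsWeakFace {V : Type*} [AddCommGroup V] [Module ℝ V] (X Y : Set V) (R : Set ℝ) : Prop :=
  ∀ f g : V →₀ ℝ, IsFinSupp X (Rplus R) f → IsFinSupp Y (Rplus R) g →
    ell f = ell g → 0 < ell g → vell f = vell g → ↑f.support ⊆ Y

/-- `Y` is a positive weak `R`-face of `X`. -/
def IsPosWeakFace {V : Type*} [AddCommGroup V] [Module ℝ V] (X Y : Set V) (R : Set ℝ) : Prop :=
  ∀ f g : V →₀ ℝ, IsFinSupp X (Rplus R) f → IsFinSupp Y (Rplus R) g →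
    vell f = vell g → ell g ≤ ell f ∧ (ell g = ell f ↔ ↑f.support ⊆ Y)

/-- `Y` is `(R',R)`-closed in `X`. -/
def IsRClosed {V : Type*} [AddCommGroup V] [Module ℝ V] (X Y : Set V) (R' R : Set ℝ) : Prop :=
  ∀ f g : V →₀ ℝ, IsFinSupp X R f → IsFinSupp Y R g →
    ell f = ell g → ell f ∈ R' → ell f ≠ 0 → vell f = vell g → ↑f.support ⊆ Y

/-- The maximizer set `X(φ)`. -/
def maximizer {V : Type*} [AddCommGroup V] [Module ℝ V] (X : Set V) (φ : V →ₗ[ℝ] ℝ) : Set V :=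
  {x | x ∈ X ∧ ∀ x' ∈ X, φ x' ≤ φ x}


section Aux
variable {V : Type*} [AddCommGroup V] [Module ℝ V]

lemma ell_add (f g : V →₀ ℝ) : ell (f + g) = ell f + ell g :=
  Finsupp.sum_add_index' (fun _ => rfl) (fun _ _ _ => rfl)

lemma vell_add (f g : V →₀ ℝ) : vell (f + g) = vell f + vell g :=
  Finsupp.sum_add_index' (fun v => zero_smul ℝ v) (fun v r s => add_smul r s v)

lemma ell_single (v : V) (c : ℝ) : ell (Finsupp.single v c) = c :=
  Finsupp.sum_single_index rfl

lemma vell_single (v : V) (c : ℝ) : vell (Finsupp.single v c) = c • v :=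
  Finsupp.sum_single_index (zero_smul ℝ v)

lemma ell_zero : ell (0 : V →₀ ℝ) = 0 := Finsupp.sum_zero_index

lemma vell_zero : vell (0 : V →₀ ℝ) = 0 := Finsupp.sum_zero_index

lemma vals (𝔸 : AddSubgroup ℝ) {f : V →₀ ℝ}
    (h : ∀ v, f v ∈ Rplus (𝔸 : Set ℝ) ∪ {0}) (v : V) : f v ∈ 𝔸 ∧ 0 ≤ f v := by
  rcases h v with ⟨hA, hnn⟩ | h0
  · exact ⟨hA, hnn⟩
  · simp only [Set.mem_singleton_iff] at h0
    rw [h0]; exact ⟨𝔸.zero_mem, le_refl 0⟩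

lemma ell_nonneg {f : V →₀ ℝ} (h : ∀ v, 0 ≤ f v) : 0 ≤ ell f :=
  Finset.sum_nonneg (fun v _ => h v)

lemma ell_memA (𝔸 : AddSubgroup ℝ) {f : V →₀ ℝ} (h : ∀ v, f v ∈ 𝔸) : ell f ∈ 𝔸 :=
  sum_mem (fun v _ => h v)

lemma eq_zero_of_ell_eq_zero {f : V →₀ ℝ} (hnn : ∀ v, 0 ≤ f v) (h : ell f = 0) : f = 0 := by
  have h' := (Finset.sum_eq_zero_iff_of_nonneg (fun v _ => hnn v)).mp h
  ext v
  by_cases hv : v ∈ f.support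
  · exact h' v hv
  · simpa using Finsupp.notMem_support_iff.mp hv

lemma key (X Y : Set V) (hYX : Y ⊆ X) (𝔸 : AddSubgroup ℝ) (h1 : (1 : ℝ) ∈ 𝔸)
    (h2 : IsWeakFace (X ∪ {0}) Y (𝔸 : Set ℝ))
    (h3 : (0 : V) ∉ {x : V | ∃ f : V →₀ ℝ,
        IsFinSupp Y ((𝔸 : Set ℝ) ∩ Set.Icc (0 : ℝ) 1) f ∧ ell f = 1 ∧ vell f = x})
    (f g : V →₀ ℝ) (hf : IsFinSupp X (Rplus (𝔸 : Set ℝ)) f)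
    (hg : IsFinSupp Y (Rplus (𝔸 : Set ℝ)) g)
    (hv : vell f = vell g) : ell g ≤ ell f := by
  by_contra hlt
  push_neg at hlt
  have hfv := fun v => vals 𝔸 hf.2 v
  have hgv := fun v => vals 𝔸 hg.2 v
  set c := ell g - ell f with hcdef
  have hc0 : 0 < c := sub_pos.mpr hlt
  have hcA : c ∈ 𝔸 :=
    𝔸.sub_mem (ell_memA 𝔸 (fun v => (hgv v).1)) (ell_memA 𝔸 (fun v => (hfv v).1))
  set f' := f + Finsupp.single (0 : V) c with hf'def
  have hf'0 : f' (0 : V) = f 0 + c := by simp [hf'def]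
  have hf'ne : ∀ v : V, v ≠ 0 → f' v = f v := by
    intro v hvne
    simp [hf'def, Finsupp.single_eq_of_ne' (Ne.symm hvne)]
  have hf'supp : IsFinSupp (X ∪ {0}) (Rplus (𝔸 : Set ℝ)) f' := by
    constructor
    · intro v hvmem
      by_cases hv0 : v = (0 : V)
      · right; simp [hv0]
      · left
        apply hf.1
        have : f v ≠ 0 := by
          rw [← hf'ne v hv0]
          exact Finsupp.mem_support_iff.mp hvmem
        exact Finsupp.mem_support_iff.mpr this
    · intro v
      by_cases hv0 : v = (0 : V)
      · subst hv0
        rw [hf'0]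
        exact Or.inl ⟨𝔸.add_mem (hfv 0).1 hcA, add_nonneg (hfv 0).2 hc0.le⟩
      · rw [hf'ne v hv0]; exact hf.2 v
  have hellf' : ell f' = ell g := by
    rw [hf'def, ell_add, ell_single, hcdef]; ring
  have hvellf' : vell f' = vell g := by
    rw [hf'def, vell_add, vell_single, smul_zero, add_zero, hv]
  have hgpos : 0 < ell g := by
    have := ell_nonneg (fun v => (hfv v).2)
    linarith
  have hsubY := h2 f' g hf'supp hg hellf' hgpos hvellf'
  have h0Y : (0 : V) ∈ Y := by
    apply hsubY
    apply Finsupp.mem_support_iff.mpr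
    rw [hf'0]
    exact ne_of_gt (by linarith [(hfv 0).2])
  exact h3 ⟨Finsupp.single (0 : V) 1, ⟨by
      intro v hvmem
      have := Finsupp.support_single_subset hvmem
      simp only [Finset.mem_singleton] at this
      rw [this]; exact h0Y,
    fun v => by
      by_cases hv0 : v = (0 : V)
      · subst hv0
        rw [Finsupp.single_eq_same]
        exact Or.inl ⟨h1, by norm_num⟩
      · rw [Finsupp.single_eq_of_ne' (Ne.symm hv0)]; right; rfl⟩,
    ell_single 0 1, by rw [vell_single, smul_zero]⟩

end Aux

/-- For `𝔸` an additive subgroup of `ℝ` with `1 ∈ 𝔸`, `Y` is a positive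
weak `𝔸`-face of `X` iff `Y` is a weak `𝔸`-face of both `X` and `X ∪ {0}`, and
`0 ∉ conv_𝔸(Y)`, where `conv_𝔸(Y) = {ℓ⃗(f) : f ∈ Fin(Y, 𝔸 ∩ [0,1]), ℓ(f) = 1}`. -/
theorem statement9 {V : Type*} [AddCommGroup V] [Module ℝ V]
    (X Y : Set V) (hYX : Y ⊆ X) (𝔸 : AddSubgroup ℝ) (h1 : (1 : ℝ) ∈ 𝔸) :
    IsPosWeakFace X Y (𝔸 : Set ℝ) ↔
      IsWeakFace X Y (𝔸 : Set ℝ) ∧ IsWeakFace (X ∪ {0}) Y (𝔸 : Set ℝ) ∧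
        (0 : V) ∉ {x : V | ∃ f : V →₀ ℝ,
          IsFinSupp Y ((𝔸 : Set ℝ) ∩ Set.Icc (0 : ℝ) 1) f ∧ ell f = 1 ∧ vell f = x} := by
  constructor
  · intro hpos
    refine ⟨?_, ?_, ?_⟩
    · intro f g hf hg he hgpos hv
      exact ((hpos f g hf hg hv).2).mp he.symm
    · intro f g hf hg he hgpos hv
      have hfv := fun v => vals 𝔸 hf.2 v
      set f' := f.erase (0 : V) with hf'def
      have hf'supp : IsFinSupp X (Rplus (𝔸 : Set ℝ)) f' := by
        constructor
        · intro v hvmem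
          have hv' : f' v ≠ 0 := Finsupp.mem_support_iff.mp hvmem
          have hv0 : v ≠ (0 : V) := by
            intro h0; rw [h0, hf'def, Finsupp.erase_same] at hv'; exact hv' rfl
          have hfvne : f v ≠ 0 := by rwa [hf'def, Finsupp.erase_ne hv0] at hv'
          rcases hf.1 (Finsupp.mem_support_iff.mpr hfvne) with hx | h0
          · exact hx
          · exact absurd h0 hv0
        · intro v
          by_cases hv0 : v = (0 : V)
          · subst hv0; rw [hf'def, Finsupp.erase_same]; right; rfl
          · rw [hf'def, Finsupp.erase_ne hv0]; exact hf.2 v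
      have hdecomp : f' + Finsupp.single (0 : V) (f 0) = f := Finsupp.erase_add_single 0 f
      have hellf : ell f = ell f' + f 0 := by
        have h' := congrArg ell hdecomp
        rw [ell_add, ell_single] at h'
        linarith
      have hvellf : vell f = vell f' := by
        have h' := congrArg vell hdecomp
        rw [vell_add, vell_single, smul_zero, add_zero] at h'
        exact h'.symm
      obtain ⟨hle, hiff⟩ := hpos f' g hf'supp hg (by rw [← hvellf, hv])
      have hf00 : f 0 = 0 := by
        have h0nn := (hfv 0).2
        have : ell g = ell f' + f 0 := by rw [← he, hellf]
        linarith
      have hf'f : f' = f := by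
        rw [hf'def]
        apply Finsupp.erase_of_notMem_support
        simp [Finsupp.mem_support_iff, hf00]
      have hsup := hiff.mp (by rw [hf'f, ← he])
      rwa [hf'f] at hsup
    · rintro ⟨f, ⟨hfsupp, hfvals⟩, hellf, hvellf⟩
      have hf' : IsFinSupp Y (Rplus (𝔸 : Set ℝ)) f := by
        refine ⟨hfsupp, fun v => ?_⟩
        rcases hfvals v with ⟨hA, h0, _⟩ | h0
        · exact Or.inl ⟨hA, h0⟩
        · exact Or.inr h0
      have hz : IsFinSupp X (Rplus (𝔸 : Set ℝ)) (0 : V →₀ ℝ) := by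
        constructor
        · simp
        · intro v; right; rfl
      obtain ⟨hle, _⟩ := hpos (0 : V →₀ ℝ) f hz hf' (by rw [vell_zero, hvellf])
      rw [hellf, ell_zero] at hle
      linarith
  · rintro ⟨hw1, hw2, hconv⟩
    intro f g hf hg hv
    have hfv := fun v => vals 𝔸 hf.2 v
    have hgv := fun v => vals 𝔸 hg.2 v
    have hle : ell g ≤ ell f := key X Y hYX 𝔸 h1 hw2 hconv f g hf hg hv
    refine ⟨hle, ?_, ?_⟩
    · intro he
      rcases lt_or_eq_of_le (ell_nonneg fun v => (hgv v).2) with hgpos | hg0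
      · exact hw1 f g hf hg he.symm hgpos hv
      · have hf0 : f = 0 := eq_zero_of_ell_eq_zero (fun v => (hfv v).2) (by rw [← he, ← hg0])
        rw [hf0]; simp
    · intro hsub
      have hle' : ell f ≤ ell g :=
        key X Y hYX 𝔸 h1 hw2 hconv g f ⟨hg.1.trans hYX, hg.2⟩ ⟨hsub, hf.2⟩ hv.symm
      linarith
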